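/- arXiv:2102.03716 — 3 statements merged into one kernel-verified Lean document; each statement's English description precedes it below -/
import Mathlib

section
/- Let L_X and L_Y be Laplacians of connected undirected graphs on the same node set V of size N. Then the maximum distance mapping distortion γ^F_max = max over distinct node pairs (p,q) of [(e_p - e_q)ᵀL_Y⁺(e_p - e_q)] / [(e_p - e_q)ᵀL_X⁺(e_p - e_q)] is bounded above by λ_max(L_Y⁺ L_X). -/
open Matrix

/-- `B` is the Moore–Penrose pseudoinverse of `A`. -/
def IsMoorePenroseInv {N : ℕ} (A B : Matrix (Fin N) (Fin N) ℝ) : Prop :=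
  A * B * A = A ∧ B * A * B = B ∧ (A * B)ᵀ = A * B ∧ (B * A)ᵀ = B * A

lemma dp_mv {N : ℕ} (A : Matrix (Fin N) (Fin N) ℝ) (x y : Fin N → ℝ) :
    (A *ᵥ x) ⬝ᵥ y = x ⬝ᵥ (Aᵀ *ᵥ y) := by
  rw [dotProduct_mulVec x Aᵀ y, vecMul_transpose]

lemma mp_unique {N : ℕ} {A B C : Matrix (Fin N) (Fin N) ℝ}
    (hB : IsMoorePenroseInv A B) (hC : IsMoorePenroseInv A C) : B = C := by
  obtain ⟨hB1, hB2, hB3, hB4⟩ := hB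
  obtain ⟨hC1, hC2, hC3, hC4⟩ := hC
  have e1 : A * B = A * C := by
    have h : A * B = (A * C) * (A * B) := by
      conv_lhs => rw [← hC1]
      rw [mul_assoc]
    have h2 : (A * C) * (A * B) = A * C := by
      rw [← hC3, ← hB3, ← transpose_mul]
      have : (A * B) * (A * C) = A * C := by
        rw [← mul_assoc, hB1]
      rw [this]
    rw [h, h2]
  have e2 : B * A = C * A := by
    have h : B * A = (B * A) * (C * A) := by
      conv_lhs => rw [← hC1]
      rw [← mul_assoc, ← mul_assoc, mul_assoc (B*A)]
    have h2 : (B * A) * (C * A) = C * A := by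
      rw [← hB4, ← hC4, ← transpose_mul]
      have : (C * A) * (B * A) = C * A := by
        rw [mul_assoc, ← mul_assoc A B A, hB1]
      rw [this]
    rw [h, h2]
  calc B = B * A * B := hB2.symm
    _ = (C * A) * B := by rw [e2]
    _ = C * (A * B) := by rw [mul_assoc]
    _ = C * (A * C) := by rw [e1]
    _ = C * A * C := by rw [mul_assoc]
    _ = C := hC2

lemma mp_transpose {N : ℕ} {A B : Matrix (Fin N) (Fin N) ℝ}
    (h : IsMoorePenroseInv A B) : IsMoorePenroseInv Aᵀ Bᵀ := by
  obtain ⟨h1, h2, h3, h4⟩ := h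
  refine ⟨?_, ?_, ?_, ?_⟩
  · rw [← transpose_mul, ← transpose_mul, ← mul_assoc, h1]
  · rw [← transpose_mul, ← transpose_mul, ← mul_assoc, h2]
  · rw [← transpose_mul, transpose_transpose]
    exact h4.symm
  · rw [← transpose_mul, transpose_transpose]
    exact h3.symm


/-- The maximum distance mapping distortion over all distinct node pairs is bounded above
by the SPADE score λ_max(L_Y⁺ L_X). -/
theorem dmd_le_spade (N : ℕ)
    (GX GY : SimpleGraph (Fin N)) [DecidableRel GX.Adj] [DecidableRel GY.Adj]
    (hGX : GX.Connected) (hGY : GY.Connected)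
    (Xp Yp : Matrix (Fin N) (Fin N) ℝ)
    (hXp : IsMoorePenroseInv (GX.lapMatrix ℝ) Xp)
    (hYp : IsMoorePenroseInv (GY.lapMatrix ℝ) Yp)
    (lam : ℝ)
    (hlam : Module.End.HasEigenvalue (Matrix.mulVecLin (Yp * GX.lapMatrix ℝ)) lam)
    (hlam_max : ∀ μ : ℝ,
      Module.End.HasEigenvalue (Matrix.mulVecLin (Yp * GX.lapMatrix ℝ)) μ → μ ≤ lam) :
    ∀ p q : Fin N, p ≠ q →
      ((Pi.single p 1 - Pi.single q 1) ⬝ᵥ Yp.mulVec (Pi.single p 1 - Pi.single q 1)) /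
        ((Pi.single p 1 - Pi.single q 1) ⬝ᵥ Xp.mulVec (Pi.single p 1 - Pi.single q 1)) ≤
      lam := by
  intro p q hpq
  set L : Matrix (Fin N) (Fin N) ℝ := GX.lapMatrix ℝ with hLdef
  have hLsym : Lᵀ = L := GX.isSymm_lapMatrix (R := ℝ)
  have hXpsym : Xpᵀ = Xp := by
    have h1 : IsMoorePenroseInv L Xpᵀ := by
      have := mp_transpose hXp; rwa [hLsym] at this
    exact mp_unique h1 hXp
  have hYpsym : Ypᵀ = Yp := by
    have h1 : IsMoorePenroseInv (GY.lapMatrix ℝ) Ypᵀ := by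
      have := mp_transpose hYp
      rwa [show (GY.lapMatrix ℝ)ᵀ = GY.lapMatrix ℝ from GY.isSymm_lapMatrix (R := ℝ)] at this
    exact mp_unique h1 hYp
  set v : Fin N → ℝ := Pi.single p 1 - Pi.single q 1 with hvdef
  have hvsum : v ⬝ᵥ (fun _ => (1:ℝ)) = 0 := by
    simp [hvdef, sub_dotProduct, dotProduct, Pi.single_apply]
  have hvp : v p = 1 := by
    simp [hvdef, Pi.single_eq_same, Pi.single_eq_of_ne hpq]
  have hvne : v ≠ 0 := by
    intro h; rw [h] at hvp; simp at hvp
  -- projection identity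
  have hproj : L *ᵥ (Xp *ᵥ v) = v := by
    set u : Fin N → ℝ := v - (L * Xp) *ᵥ v with hudef
    have hud : ∀ y, u ⬝ᵥ (L *ᵥ y) = 0 := by
      intro y
      have h2 : ((L * Xp) *ᵥ v) ⬝ᵥ (L *ᵥ y) = v ⬝ᵥ (L *ᵥ y) := by
        rw [dp_mv, hXp.2.2.1, mulVec_mulVec, hXp.1]
      rw [hudef, sub_dotProduct, h2, sub_self]
    have hLu : L *ᵥ u = 0 := by
      have h4 : (L *ᵥ u) ⬝ᵥ (L *ᵥ u) = 0 := by
        rw [dp_mv, hLsym]; exact hud (L *ᵥ u)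
      exact dotProduct_self_eq_zero.mp h4
    have hconst : ∀ i j, u i = u j := by
      intro i j
      exact (GX.lapMatrix_mulVec_eq_zero_iff_forall_reachable (x := u)).mp
        (by exact hLu) i j (hGX.preconnected i j)
    have husum : u ⬝ᵥ (fun _ => (1:ℝ)) = 0 := by
      have h5 : ((L * Xp) *ᵥ v) ⬝ᵥ (fun _ => (1:ℝ)) = 0 := by
        rw [dp_mv, transpose_mul, hXpsym, hLsym, ← mulVec_mulVec,
          GX.lapMatrix_mulVec_const_eq_zero, mulVec_zero, dotProduct_zero]
      rw [hudef, sub_dotProduct, hvsum, h5, sub_zero]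
    have hu0 : u = 0 := by
      funext i
      have hsum : ∑ j, u j = 0 := by simpa [dotProduct] using husum
      have hsum2 : ∑ j, u j = (N : ℝ) * u i := by
        rw [Finset.sum_congr rfl fun j _ => hconst j i]
        simp [Finset.card_univ, mul_comm]
      have hN : (0:ℝ) < (N:ℝ) := by
        exact_mod_cast Fin.pos p
      have : (N : ℝ) * u i = 0 := by rw [← hsum2, hsum]
      simpa [hN.ne'] using this
    have : v - (L * Xp) *ᵥ v = 0 := hudef ▸ hu0
    have h6 : (L * Xp) *ᵥ v = v := by
      have := sub_eq_zero.mp this; exact this.symm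
    rw [mulVec_mulVec]; exact h6
  -- square root
  have hLpsd : L.PosSemidef := SimpleGraph.posSemidef_lapMatrix (R := ℝ) (G := GX)
  obtain ⟨T, hTT, hTsym⟩ : ∃ T : Matrix (Fin N) (Fin N) ℝ, T * T = L ∧ Tᵀ = T := by
    open scoped MatrixOrder in
    exact ⟨CFC.sqrt L, CFC.sqrt_mul_sqrt_self L hLpsd.nonneg, by
      have h : (CFC.sqrt L)ᴴ = CFC.sqrt L := (CFC.sqrt_nonneg L).posSemidef.1
      rwa [conjTranspose_eq_transpose_of_trivial] at h⟩
  set M : Matrix (Fin N) (Fin N) ℝ := T * Yp * T with hMdef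
  have hMsym : M.IsHermitian := by
    show Mᴴ = M
    rw [conjTranspose_eq_transpose_of_trivial, hMdef, transpose_mul, transpose_mul,
      hTsym, hYpsym, mul_assoc]
  set z : Fin N → ℝ := T *ᵥ (Xp *ᵥ v) with hzdef
  have hTz : T *ᵥ z = v := by
    rw [hzdef, mulVec_mulVec _ T T, hTT]; exact hproj
  have hzne : z ≠ 0 := fun h => hvne (by rw [← hTz, h, mulVec_zero])
  have hden : v ⬝ᵥ (Xp *ᵥ v) = z ⬝ᵥ z := by
    conv_lhs => rw [← hTz]
    rw [dp_mv, hTsym, hTz, ← hzdef]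
  have hnum : v ⬝ᵥ (Yp *ᵥ v) = z ⬝ᵥ (M *ᵥ z) := by
    conv_lhs => rw [← hTz]
    rw [dp_mv, hTsym, mulVec_mulVec _ Yp T, mulVec_mulVec _ T (Yp * T),
      show T * (Yp * T) = M by rw [hMdef, mul_assoc]]
  have hdenpos : 0 < v ⬝ᵥ (Xp *ᵥ v) := by
    rw [hden]
    have hne : z ⬝ᵥ z ≠ 0 := fun h => hzne (dotProduct_self_eq_zero.mp h)
    have hnn : 0 ≤ z ⬝ᵥ z := Finset.sum_nonneg fun i _ => mul_self_nonneg _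
    exact lt_of_le_of_ne hnn (Ne.symm hne)
  -- 0 ≤ lam
  have hlam0 : (0:ℝ) ≤ lam := by
    apply hlam_max 0
    apply Module.End.hasEigenvalue_of_hasEigenvector
      (x := (fun _ => (1:ℝ)))
    constructor
    · rw [Module.End.mem_eigenspace_iff, Matrix.mulVecLin_apply, ← mulVec_mulVec,
        GX.lapMatrix_mulVec_const_eq_zero, mulVec_zero, zero_smul]
    · intro h
      have := congrFun h p
      simp at this
  -- eigenvalue transfer
  have hkey : ∀ i : Fin N, hMsym.eigenvalues i ≤ lam := by
    intro i
    rcases eq_or_ne (hMsym.eigenvalues i) 0 with h0 | h0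
    · rw [h0]; exact hlam0
    · apply hlam_max
      set b : Fin N → ℝ := ⇑(hMsym.eigenvectorBasis i) with hbdef
      have hMb : M *ᵥ b = hMsym.eigenvalues i • b := hMsym.mulVec_eigenvectorBasis i
      set w : Fin N → ℝ := Yp *ᵥ (T *ᵥ b) with hwdef
      have hTw : T *ᵥ w = hMsym.eigenvalues i • b := by
        rw [hwdef, mulVec_mulVec _ Yp T, mulVec_mulVec _ T (Yp * T),
          show T * (Yp * T) = M by rw [hMdef, mul_assoc]]
        exact hMb
      have hbne : b ≠ 0 := by
        intro h
        have := (hMsym.eigenvectorBasis).toBasis.ne_zero i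
        apply this
        rw [OrthonormalBasis.coe_toBasis]
        ext j
        exact congrFun h j
      have hwne : w ≠ 0 := by
        intro h
        rw [h, mulVec_zero] at hTw
        rcases smul_eq_zero.mp hTw.symm with h1 | h1
        · exact h0 h1
        · exact hbne h1
      apply Module.End.hasEigenvalue_of_hasEigenvector (x := w)
      constructor
      · rw [Module.End.mem_eigenspace_iff, Matrix.mulVecLin_apply, ← mulVec_mulVec,
          ← hTT, ← mulVec_mulVec w T T, hTw, mulVec_smul, mulVec_smul, ← hwdef]
      · exact hwne
  -- Rayleigh bound
  have hray : z ⬝ᵥ (M *ᵥ z) ≤ lam * (z ⬝ᵥ z) := by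
    have hMT : Mᵀ = M := by
      have h : Mᴴ = M := hMsym
      rwa [conjTranspose_eq_transpose_of_trivial] at h
    have hinner : ∀ x y : EuclideanSpace ℝ (Fin N),
        (inner ℝ x y : ℝ) = x ⬝ᵥ y := by
      intro x y
      simp [PiLp.inner_apply, RCLike.inner_apply, dotProduct, mul_comm]
    obtain ⟨zE, hzE⟩ : ∃ w : EuclideanSpace ℝ (Fin N), w.ofLp = z := ⟨WithLp.toLp 2 z, rfl⟩
    obtain ⟨mzE, hmzE⟩ : ∃ w : EuclideanSpace ℝ (Fin N), w.ofLp = M *ᵥ z := ⟨WithLp.toLp 2 (M *ᵥ z), rfl⟩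
    have hMb : ∀ j : Fin N,
        M *ᵥ (hMsym.eigenvectorBasis j : EuclideanSpace ℝ (Fin N))
          = hMsym.eigenvalues j • (hMsym.eigenvectorBasis j : EuclideanSpace ℝ (Fin N)) :=
      fun j => hMsym.mulVec_eigenvectorBasis j
    have key1 : (inner ℝ zE mzE : ℝ) = ∑ j, (inner ℝ zE (hMsym.eigenvectorBasis j) : ℝ) *
        (inner ℝ (hMsym.eigenvectorBasis j) mzE : ℝ) :=
      (hMsym.eigenvectorBasis.sum_inner_mul_inner _ _).symm
    have key2 : ∀ j : Fin N, (inner ℝ (hMsym.eigenvectorBasis j) mzE : ℝ)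
        = hMsym.eigenvalues j * (inner ℝ (hMsym.eigenvectorBasis j) zE : ℝ) := by
      intro j
      rw [hinner, hinner, hmzE, hzE]
      have hd := dp_mv M (hMsym.eigenvectorBasis j) z
      rw [hMT] at hd
      rw [← hd, hMb j, smul_dotProduct, smul_eq_mul]
    have key3 : ∀ j : Fin N, (inner ℝ zE (hMsym.eigenvectorBasis j) : ℝ)
        = (inner ℝ (hMsym.eigenvectorBasis j) zE : ℝ) := fun j => real_inner_comm _ _
    have e1 : z ⬝ᵥ (M *ᵥ z) = ∑ j, hMsym.eigenvalues j *
        ((inner ℝ (hMsym.eigenvectorBasis j) zE : ℝ) * (inner ℝ (hMsym.eigenvectorBasis j) zE : ℝ)) := by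
      have h0 : z ⬝ᵥ (M *ᵥ z) = (inner ℝ zE mzE : ℝ) := by rw [hinner, hzE, hmzE]
      rw [h0, key1]
      refine Finset.sum_congr rfl fun j _ => ?_
      rw [key2 j, key3 j]; ring
    have e2 : z ⬝ᵥ z = ∑ j,
        (inner ℝ (hMsym.eigenvectorBasis j) zE : ℝ) * (inner ℝ (hMsym.eigenvectorBasis j) zE : ℝ) := by
      have h0 : z ⬝ᵥ z = (inner ℝ zE zE : ℝ) := by rw [hinner, hzE]
      rw [h0, ← hMsym.eigenvectorBasis.sum_inner_mul_inner zE zE]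
      exact Finset.sum_congr rfl fun j _ => by rw [key3 j]
    rw [e1, e2, Finset.mul_sum]
    exact Finset.sum_le_sum fun j _ => mul_le_mul_of_nonneg_right (hkey j) (mul_self_nonneg _)
  rw [div_le_iff₀ hdenpos]
  calc v ⬝ᵥ (Yp *ᵥ v) = z ⬝ᵥ (M *ᵥ z) := hnum
    _ ≤ lam * (z ⬝ᵥ z) := hray
    _ = lam * (v ⬝ᵥ (Xp *ᵥ v)) := by rw [hden]
end

section
/- Let L_X, L_Y be Laplacians of connected graphs on the same N-node set, and let d_X(p,q) = e_{p,q}ᵀL_X⁺e_{p,q} and d_Y(p,q) = e_{p,q}ᵀL_Y⁺e_{p,q} be effective-resistance distances. If κ = max(λ_max(L_Y⁺L_X), λ_max(L_X⁺L_Y)), then for all distinct p,q: (1/κ)d_X(p,q) ≤ d_Y(p,q) ≤ κ d_X(p,q). -/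
open Matrix

namespace ERBL

variable {N : ℕ}

lemma mp_unique (A B C : Matrix (Fin N) (Fin N) ℝ)
    (hB : IsMoorePenroseInv A B) (hC : IsMoorePenroseInv A C) : B = C := by
  obtain ⟨b1, b2, b3, b4⟩ := hB
  obtain ⟨c1, c2, c3, c4⟩ := hC
  have tB : Bᵀ * Aᵀ = A * B := by rw [← transpose_mul]; exact b3
  have tB' : Aᵀ * Bᵀ = B * A := by rw [← transpose_mul]; exact b4
  have tC : Cᵀ * Aᵀ = A * C := by rw [← transpose_mul]; exact c3
  have tC' : Aᵀ * Cᵀ = C * A := by rw [← transpose_mul]; exact c4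
  have hAB : A * B = A * C := by
    calc A * B = Bᵀ * Aᵀ := tB.symm
    _ = Bᵀ * (A * C * A)ᵀ := by rw [c1]
    _ = (Bᵀ * Aᵀ) * (Cᵀ * Aᵀ) := by simp only [transpose_mul, Matrix.mul_assoc]
    _ = (A * B) * (A * C) := by rw [tB, tC]
    _ = (A * B * A) * C := by simp only [Matrix.mul_assoc]
    _ = A * C := by rw [b1]
  have hBA : B * A = C * A := by
    calc B * A = Aᵀ * Bᵀ := tB'.symm
    _ = (A * C * A)ᵀ * Bᵀ := by rw [c1]
    _ = (Aᵀ * Cᵀ) * (Aᵀ * Bᵀ) := by simp only [transpose_mul, Matrix.mul_assoc]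
    _ = (C * A) * (B * A) := by rw [tC', tB']
    _ = C * (A * B * A) := by simp only [Matrix.mul_assoc]
    _ = C * A := by rw [b1]
  calc B = B * A * B := b2.symm
  _ = C * A * B := by rw [hBA]
  _ = C * (A * B) := by simp only [Matrix.mul_assoc]
  _ = C * (A * C) := by rw [hAB]
  _ = C * A * C := by simp only [Matrix.mul_assoc]
  _ = C := c2

lemma mp_symm (A B : Matrix (Fin N) (Fin N) ℝ) (hA : Aᵀ = A)
    (hB : IsMoorePenroseInv A B) : Bᵀ = B := by
  obtain ⟨b1, b2, b3, b4⟩ := hB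
  have h1 : A * Bᵀ * A = A := by
    have e1 : A * Bᵀ * A = (A * B * A)ᵀ := by
      simp only [transpose_mul, hA, Matrix.mul_assoc]
    rw [e1, b1, hA]
  have h2 : Bᵀ * A * Bᵀ = Bᵀ := by
    have e2 : Bᵀ * A * Bᵀ = (B * A * B)ᵀ := by
      simp only [transpose_mul, hA, Matrix.mul_assoc]
    rw [e2, b2]
  have h3 : (A * Bᵀ)ᵀ = A * Bᵀ := by
    have e3 : (A * Bᵀ)ᵀ = B * A := by
      simp only [transpose_mul, transpose_transpose, hA]
    have e4 : A * Bᵀ = B * A := by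
      calc A * Bᵀ = Aᵀ * Bᵀ := by rw [hA]
      _ = (B * A)ᵀ := (transpose_mul B A).symm
      _ = B * A := b4
    rw [e3, e4]
  have h4 : (Bᵀ * A)ᵀ = Bᵀ * A := by
    have e3 : (Bᵀ * A)ᵀ = A * B := by
      simp only [transpose_mul, transpose_transpose, hA]
    have e4 : Bᵀ * A = A * B := by
      calc Bᵀ * A = Bᵀ * Aᵀ := by rw [hA]
      _ = (A * B)ᵀ := (transpose_mul A B).symm
      _ = A * B := b3
    rw [e3, e4]
  exact mp_unique A Bᵀ B ⟨h1, h2, h3, h4⟩ ⟨b1, b2, b3, b4⟩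

lemma herm_of_symm (A : Matrix (Fin N) (Fin N) ℝ) (h : Aᵀ = A) : A.IsHermitian := by
  rw [Matrix.IsHermitian, conjTranspose_eq_transpose_of_trivial, h]

lemma dot_shift (A : Matrix (Fin N) (Fin N) ℝ) (x y : Fin N → ℝ) :
    (A.mulVec x) ⬝ᵥ y = x ⬝ᵥ (Aᵀ.mulVec y) := by
  rw [dotProduct_mulVec, vecMul_transpose]

lemma quad_bound (M : Matrix (Fin N) (Fin N) ℝ) (hM : M.IsHermitian) (lam : ℝ)
    (hlam : 0 ≤ lam)
    (hb : ∀ μ : ℝ, μ ≠ 0 → Module.End.HasEigenvalue M.mulVecLin μ → μ ≤ lam)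
    (w : Fin N → ℝ) : w ⬝ᵥ M.mulVec w ≤ lam * (w ⬝ᵥ w) := by
  have hAh : (lam • (1 : Matrix (Fin N) (Fin N) ℝ) - M).IsHermitian := by
    rw [Matrix.IsHermitian, conjTranspose_sub, conjTranspose_smul, conjTranspose_one, hM.eq]
    norm_num
  have hPSD : (lam • (1 : Matrix (Fin N) (Fin N) ℝ) - M).PosSemidef := by
    apply hAh.posSemidef_iff_eigenvalues_nonneg.mpr
    intro i
    rw [Pi.zero_apply]
    set μ := hAh.eigenvalues i with hμdef
    have hb1 := hAh.mulVec_eigenvectorBasis i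
    set v : Fin N → ℝ := ⇑(hAh.eigenvectorBasis i) with hvdef
    have hv0 : v ≠ 0 := by
      intro h0
      have hnorm := hAh.eigenvectorBasis.orthonormal.1 i
      have : (hAh.eigenvectorBasis i : EuclideanSpace ℝ (Fin N)) = 0 := by
        ext j; exact congrFun h0 j
      rw [this] at hnorm
      simp at hnorm
    have hMv : M.mulVec v = (lam - μ) • v := by
      have : (lam • (1 : Matrix (Fin N) (Fin N) ℝ) - M).mulVec v = μ • v := hb1
      rw [sub_mulVec, smul_mulVec, one_mulVec] at this
      have h2 : M.mulVec v = lam • v - μ • v := by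
        rw [← this]; abel
      rw [h2, ← sub_smul]
    by_cases hz : lam - μ = 0
    · have : μ = lam := by linarith [sub_eq_zero.mp hz]
      linarith
    · have heig : Module.End.HasEigenvalue M.mulVecLin (lam - μ) := by
        apply Module.End.hasEigenvalue_of_hasEigenvector (x := v)
        refine ⟨Module.End.mem_eigenspace_iff.mpr ?_, hv0⟩
        simpa [Matrix.mulVecLin_apply] using hMv
      have := hb _ hz heig
      linarith
  have h0 := hPSD.dotProduct_mulVec_nonneg w
  have hst : star w = w := by simp
  rw [hst, sub_mulVec, smul_mulVec, one_mulVec, dotProduct_sub,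
    dotProduct_smul] at h0
  simp only [smul_eq_mul] at h0
  linarith

open scoped MatrixOrder in
lemma exists_psqrt (L : Matrix (Fin N) (Fin N) ℝ) (hL : L.PosSemidef) :
    ∃ S : Matrix (Fin N) (Fin N) ℝ, S.PosSemidef ∧ S * S = L :=
  ⟨CFC.sqrt L, Matrix.nonneg_iff_posSemidef.mp (CFC.sqrt_nonneg L),
    CFC.sqrt_mul_sqrt_self L (Matrix.nonneg_iff_posSemidef.mpr hL)⟩

noncomputable def psqrt {L : Matrix (Fin N) (Fin N) ℝ} (hL : L.PosSemidef) :
    Matrix (Fin N) (Fin N) ℝ := Classical.choose (exists_psqrt L hL)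

lemma psqrt_psd {L : Matrix (Fin N) (Fin N) ℝ} (hL : L.PosSemidef) : (psqrt hL).PosSemidef :=
  (Classical.choose_spec (exists_psqrt L hL)).1

lemma psqrt_mul {L : Matrix (Fin N) (Fin N) ℝ} (hL : L.PosSemidef) : psqrt hL * psqrt hL = L :=
  (Classical.choose_spec (exists_psqrt L hL)).2

lemma eig_transfer (L Yp : Matrix (Fin N) (Fin N) ℝ) (hL : L.PosSemidef)
    (μ : ℝ) (hμ : μ ≠ 0)
    (h : Module.End.HasEigenvalue (psqrt hL * Yp * psqrt hL).mulVecLin μ) :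
    Module.End.HasEigenvalue (Yp * L).mulVecLin μ := by
  obtain ⟨w, hmem, hw0⟩ := h.exists_hasEigenvector
  rw [Module.End.mem_eigenspace_iff] at hmem
  simp only [Matrix.mulVecLin_apply] at hmem
  set S := psqrt hL with hSdef
  set u := Yp.mulVec (S.mulVec w) with hu
  have hSu : S.mulVec u = μ • w := by
    calc S.mulVec u = (S * Yp * S).mulVec w := by
          rw [hu, mulVec_mulVec, mulVec_mulVec]
    _ = μ • w := hmem
  have hu0 : u ≠ 0 := by
    intro h0
    apply hw0
    have : S.mulVec u = 0 := by rw [h0, mulVec_zero]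
    rw [hSu] at this
    exact (smul_eq_zero.mp this).resolve_left hμ
  apply Module.End.hasEigenvalue_of_hasEigenvector (x := u)
  refine ⟨Module.End.mem_eigenspace_iff.mpr ?_, hu0⟩
  simp only [Matrix.mulVecLin_apply]
  have hSS : S * S = L := psqrt_mul hL
  calc (Yp * L).mulVec u = Yp.mulVec (L.mulVec u) := (mulVec_mulVec u Yp L).symm
  _ = Yp.mulVec (S.mulVec (S.mulVec u)) := by rw [mulVec_mulVec u S S, hSS]
  _ = Yp.mulVec (S.mulVec (μ • w)) := by rw [hSu]
  _ = μ • u := by rw [hu, mulVec_smul, mulVec_smul]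

lemma key (L Yp B : Matrix (Fin N) (Fin N) ℝ) (hL : L.PosSemidef) (hYp : Yp.IsHermitian)
    (lam : ℝ) (hlam : 0 ≤ lam)
    (hb : ∀ μ : ℝ, Module.End.HasEigenvalue (Yp * L).mulVecLin μ → μ ≤ lam)
    (e : Fin N → ℝ) (he : L.mulVec (B.mulVec e) = e) :
    e ⬝ᵥ Yp.mulVec e ≤ lam * (e ⬝ᵥ B.mulVec e) := by
  set S := psqrt hL with hSdef
  have hSh : S.IsHermitian := (psqrt_psd hL).1
  have hSt : Sᵀ = S := by
    rw [← conjTranspose_eq_transpose_of_trivial, hSh.eq]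
  have hSS : S * S = L := psqrt_mul hL
  set v := B.mulVec e with hv
  set w := S.mulVec v with hw
  have hew : e = S.mulVec w := by
    rw [hw, mulVec_mulVec, hSS, ← he]
  have hM : (S * Yp * S).IsHermitian := by
    rw [Matrix.IsHermitian, conjTranspose_mul, conjTranspose_mul, hSh.eq, hYp.eq,
      Matrix.mul_assoc]
  have dot1 : e ⬝ᵥ Yp.mulVec e = w ⬝ᵥ (S * Yp * S).mulVec w := by
    conv_lhs => rw [hew]
    rw [dot_shift, hSt, mulVec_mulVec, mulVec_mulVec, Matrix.mul_assoc]
  have dot2 : e ⬝ᵥ B.mulVec e = w ⬝ᵥ w := by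
    rw [← hv]
    conv_lhs => rw [hew]
    rw [dot_shift, hSt, ← hw]
  rw [dot1, dot2]
  apply quad_bound _ hM lam hlam
  intro μ hμ hev
  exact hb μ (eig_transfer L Yp hL μ hμ hev)

lemma dX_pos (L B : Matrix (Fin N) (Fin N) ℝ) (hL : L.PosSemidef)
    (e : Fin N → ℝ) (he0 : e ≠ 0) (he : L.mulVec (B.mulVec e) = e) :
    0 < e ⬝ᵥ B.mulVec e := by
  set S := psqrt hL with hSdef
  have hSh : S.IsHermitian := (psqrt_psd hL).1
  have hSt : Sᵀ = S := by
    rw [← conjTranspose_eq_transpose_of_trivial, hSh.eq]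
  have hSS : S * S = L := psqrt_mul hL
  set v := B.mulVec e with hv
  set w := S.mulVec v with hw
  have hew : e = S.mulVec w := by
    rw [hw, mulVec_mulVec, hSS, ← he]
  have dot2 : e ⬝ᵥ B.mulVec e = w ⬝ᵥ w := by
    rw [← hv]
    conv_lhs => rw [hew]
    rw [dot_shift, hSt, ← hw]
  rw [dot2]
  have hw0 : w ≠ 0 := by
    intro h0
    apply he0
    rw [hew, h0, mulVec_zero]
  have hnn : 0 ≤ w ⬝ᵥ w := by
    apply Finset.sum_nonneg
    intro i _
    exact mul_self_nonneg _
  rcases lt_or_eq_of_le hnn with h | h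
  · exact h
  · exact absurd (dotProduct_self_eq_zero.mp h.symm) hw0

lemma proj (G : SimpleGraph (Fin N)) [DecidableRel G.Adj] (hG : G.Connected)
    (B : Matrix (Fin N) (Fin N) ℝ) (hB : IsMoorePenroseInv (G.lapMatrix ℝ) B)
    (p q : Fin N) (hpq : p ≠ q) :
    (G.lapMatrix ℝ).mulVec (B.mulVec (Pi.single p 1 - Pi.single q 1)) =
      Pi.single p 1 - Pi.single q 1 := by
  set L := G.lapMatrix ℝ with hLdef
  set e : Fin N → ℝ := Pi.single p 1 - Pi.single q 1 with hedef
  obtain ⟨b1, b2, b3, b4⟩ := hB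
  have hLsym : Lᵀ = L := G.isSymm_lapMatrix (R := ℝ)
  have hBsym : Bᵀ = B := ERBL.mp_symm L B hLsym ⟨b1, b2, b3, b4⟩
  have hcomm2 : L * B = B * L := by
    calc L * B = Lᵀ * Bᵀ := by rw [hLsym, hBsym]
    _ = (B * L)ᵀ := (transpose_mul B L).symm
    _ = B * L := b4
  set r : Fin N → ℝ := e - (B * L).mulVec e with hrdef
  have hLr : L.mulVec r = 0 := by
    rw [hrdef, mulVec_sub, mulVec_mulVec]
    have : L * (B * L) = L := by rw [← Matrix.mul_assoc]; exact b1
    rw [this, sub_self]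
  have hreach : ∀ i j, r i = r j := by
    have h0 : Matrix.toLin' L r = 0 := by rw [Matrix.toLin'_apply]; exact hLr
    intro i j
    exact (G.lapMatrix_mulVec_eq_zero_iff_forall_reachable (x := r)).mp hLr i j
      (hG.preconnected i j)
  have hsum_e : ∑ i, e i = 0 := by
    simp [hedef, Pi.single_apply, Finset.sum_sub_distrib, hpq]
  have hsum_Be : ∑ i, ((B * L).mulVec e) i = 0 := by
    have h1 : (fun _ : Fin N => (1 : ℝ)) ⬝ᵥ ((B * L).mulVec e)
        = ∑ i, ((B * L).mulVec e) i := by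
      simp [dotProduct]
    have h2 : (fun _ : Fin N => (1 : ℝ)) ⬝ᵥ ((B * L).mulVec e) = 0 := by
      rw [dotProduct_mulVec, ← mulVec_transpose, b4, ← mulVec_mulVec]
      rw [show L.mulVec (fun _ : Fin N => (1 : ℝ)) = 0 from
        G.lapMatrix_mulVec_const_eq_zero]
      simp
    rw [← h1, h2]
  have hsum_r : ∑ i, r i = 0 := by
    rw [hrdef]
    simp only [Pi.sub_apply, Finset.sum_sub_distrib, hsum_e, hsum_Be, sub_zero]
  have hNr : (N : ℝ) * r p = 0 := by
    have : ∑ i, r i = (N : ℝ) * r p := by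
      rw [Finset.sum_congr rfl (fun i _ => hreach i p)]
      simp [Finset.sum_const, Finset.card_univ, nsmul_eq_mul]
    rw [← this, hsum_r]
  have hrp : r p = 0 := by
    have hN : (0 : ℝ) < N := by exact_mod_cast Fin.pos p
    have := mul_eq_zero.mp hNr
    rcases this with h | h
    · exact absurd h (ne_of_gt hN)
    · exact h
  have hr0 : r = 0 := by
    funext i
    rw [hreach i p, hrp]; rfl
  have hBLe : (B * L).mulVec e = e := by
    have := sub_eq_zero.mp (hrdef ▸ hr0 : e - (B * L).mulVec e = 0)
    exact this.symm
  rw [mulVec_mulVec, hcomm2, hBLe]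

end ERBL

/-- With κ = max(λ_max(L_Y⁺L_X), λ_max(L_X⁺L_Y)), the effective-resistance distances
satisfy the κ-bi-Lipschitz bound `(1/κ) d_X(p,q) ≤ d_Y(p,q) ≤ κ d_X(p,q)`. -/
theorem effective_resistance_bi_lipschitz (N : ℕ)
    (GX GY : SimpleGraph (Fin N)) [DecidableRel GX.Adj] [DecidableRel GY.Adj]
    (hGX : GX.Connected) (hGY : GY.Connected)
    (Xp Yp : Matrix (Fin N) (Fin N) ℝ)
    (hXp : IsMoorePenroseInv (GX.lapMatrix ℝ) Xp)
    (hYp : IsMoorePenroseInv (GY.lapMatrix ℝ) Yp)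
    (lamYX lamXY : ℝ)
    (hlamYX : Module.End.HasEigenvalue
      (Matrix.mulVecLin (Yp * GX.lapMatrix ℝ)) lamYX)
    (hlamYX_max : ∀ μ : ℝ,
      Module.End.HasEigenvalue (Matrix.mulVecLin (Yp * GX.lapMatrix ℝ)) μ → μ ≤ lamYX)
    (hlamXY : Module.End.HasEigenvalue
      (Matrix.mulVecLin (Xp * GY.lapMatrix ℝ)) lamXY)
    (hlamXY_max : ∀ μ : ℝ,
      Module.End.HasEigenvalue (Matrix.mulVecLin (Xp * GY.lapMatrix ℝ)) μ → μ ≤ lamXY)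
    (κ : ℝ) (hκ : κ = max lamYX lamXY) :
    ∀ p q : Fin N, p ≠ q →
      (1 / κ) * ((Pi.single p 1 - Pi.single q 1) ⬝ᵥ
          Xp.mulVec (Pi.single p 1 - Pi.single q 1)) ≤
        (Pi.single p 1 - Pi.single q 1) ⬝ᵥ Yp.mulVec (Pi.single p 1 - Pi.single q 1) ∧
      (Pi.single p 1 - Pi.single q 1) ⬝ᵥ Yp.mulVec (Pi.single p 1 - Pi.single q 1) ≤
        κ * ((Pi.single p 1 - Pi.single q 1) ⬝ᵥ
          Xp.mulVec (Pi.single p 1 - Pi.single q 1)) := by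
  intro p q hpq
  set LX := GX.lapMatrix ℝ with hLX
  set LY := GY.lapMatrix ℝ with hLY
  set e : Fin N → ℝ := Pi.single p 1 - Pi.single q 1 with hedef
  have hLXps : LX.PosSemidef := SimpleGraph.posSemidef_lapMatrix ℝ GX
  have hLYps : LY.PosSemidef := SimpleGraph.posSemidef_lapMatrix ℝ GY
  have hXsym : Xpᵀ = Xp := ERBL.mp_symm _ _ (GX.isSymm_lapMatrix (R := ℝ)) hXp
  have hYsym : Ypᵀ = Yp := ERBL.mp_symm _ _ (GY.isSymm_lapMatrix (R := ℝ)) hYp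
  have hXh : Xp.IsHermitian := ERBL.herm_of_symm _ hXsym
  have hYh : Yp.IsHermitian := ERBL.herm_of_symm _ hYsym
  have he0 : e ≠ 0 := by
    intro h
    have h1 := congrFun h p
    rw [hedef] at h1
    simp [Pi.single_apply, hpq] at h1
  have hprojX : LX.mulVec (Xp.mulVec e) = e := ERBL.proj GX hGX Xp hXp p q hpq
  have hprojY : LY.mulVec (Yp.mulVec e) = e := ERBL.proj GY hGY Yp hYp p q hpq
  have hdX : 0 < e ⬝ᵥ Xp.mulVec e := ERBL.dX_pos LX Xp hLXps e he0 hprojX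
  have hdY : 0 < e ⬝ᵥ Yp.mulVec e := ERBL.dX_pos LY Yp hLYps e he0 hprojY
  have hone : (fun _ : Fin N => (1 : ℝ)) ≠ 0 := by
    intro h
    have := congrFun h p
    simp at this
  have hzeroYX : Module.End.HasEigenvalue (Matrix.mulVecLin (Yp * LX)) 0 := by
    apply Module.End.hasEigenvalue_of_hasEigenvector (x := fun _ => (1 : ℝ))
    refine ⟨Module.End.mem_eigenspace_iff.mpr ?_, hone⟩
    simp only [Matrix.mulVecLin_apply]
    rw [← mulVec_mulVec, hLX, GX.lapMatrix_mulVec_const_eq_zero, mulVec_zero, zero_smul]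
  have hzeroXY : Module.End.HasEigenvalue (Matrix.mulVecLin (Xp * LY)) 0 := by
    apply Module.End.hasEigenvalue_of_hasEigenvector (x := fun _ => (1 : ℝ))
    refine ⟨Module.End.mem_eigenspace_iff.mpr ?_, hone⟩
    simp only [Matrix.mulVecLin_apply]
    rw [← mulVec_mulVec, hLY, GY.lapMatrix_mulVec_const_eq_zero, mulVec_zero, zero_smul]
  have hlamYX0 : 0 ≤ lamYX := hlamYX_max 0 hzeroYX
  have hlamXY0 : 0 ≤ lamXY := hlamXY_max 0 hzeroXY
  have hYX : e ⬝ᵥ Yp.mulVec e ≤ lamYX * (e ⬝ᵥ Xp.mulVec e) :=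
    ERBL.key LX Yp Xp hLXps hYh lamYX hlamYX0 hlamYX_max e hprojX
  have hXY : e ⬝ᵥ Xp.mulVec e ≤ lamXY * (e ⬝ᵥ Yp.mulVec e) :=
    ERBL.key LY Xp Yp hLYps hXh lamXY hlamXY0 hlamXY_max e hprojY
  have hk1 : lamYX ≤ κ := hκ ▸ le_max_left _ _
  have hk2 : lamXY ≤ κ := hκ ▸ le_max_right _ _
  have hκpos : 0 < κ := by nlinarith [mul_le_mul_of_nonneg_right hk2 hdY.le]
  constructor
  · rw [one_div, inv_mul_le_iff₀ hκpos]
    calc e ⬝ᵥ Xp.mulVec e ≤ lamXY * (e ⬝ᵥ Yp.mulVec e) := hXY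
    _ ≤ κ * (e ⬝ᵥ Yp.mulVec e) := mul_le_mul_of_nonneg_right hk2 hdY.le
  · calc e ⬝ᵥ Yp.mulVec e ≤ lamYX * (e ⬝ᵥ Xp.mulVec e) := hYX
    _ ≤ κ * (e ⬝ᵥ Xp.mulVec e) := mul_le_mul_of_nonneg_right hk1 hdX.le
end

section
/- Let L_X, L_Y be Laplacians of connected graphs on the same node set. If every generalized eigenvalue λ_i of the pencil (L_X, L_Y) (eigenvalues of L_Y⁺L_X on the subspace orthogonal to 1) satisfies λ_i ≤ Λ, then for every distinct pair (p,q), the effective-resistance DMD satisfies γ^F(p,q) = d_Y(p,q)/d_X(p,q) ≤ Λ, where d_X, d_Y are effective-resistance distances in G_X and G_Y respectively. -/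
open Matrix

namespace DMDaux

variable {N : ℕ}

lemma mp_unique {A B₁ B₂ : Matrix (Fin N) (Fin N) ℝ}
    (h₁ : IsMoorePenroseInv A B₁) (h₂ : IsMoorePenroseInv A B₂) : B₁ = B₂ := by
  obtain ⟨a1, b1, c1, d1⟩ := h₁
  obtain ⟨a2, b2, c2, d2⟩ := h₂
  have hAB : A * B₁ = A * B₂ := by
    have e1 : A * B₁ = (A * B₂) * (A * B₁) := by rw [← mul_assoc, a2]
    calc A * B₁ = (A * B₁)ᵀ := c1.symm
      _ = ((A * B₂) * (A * B₁))ᵀ := by rw [← e1]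
      _ = (A * B₁)ᵀ * (A * B₂)ᵀ := transpose_mul _ _
      _ = (A * B₁) * (A * B₂) := by rw [c1, c2]
      _ = (A * B₁ * A) * B₂ := by rw [mul_assoc (A * B₁) A B₂]
      _ = A * B₂ := by rw [a1]
  have hBA : B₁ * A = B₂ * A := by
    have e1 : B₁ * A = (B₁ * A) * (B₂ * A) := by
      rw [mul_assoc B₁ A (B₂ * A), ← mul_assoc A B₂ A, a2]
    calc B₁ * A = (B₁ * A)ᵀ := d1.symm
      _ = ((B₁ * A) * (B₂ * A))ᵀ := by rw [← e1]
      _ = (B₂ * A)ᵀ * (B₁ * A)ᵀ := transpose_mul _ _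
      _ = (B₂ * A) * (B₁ * A) := by rw [d1, d2]
      _ = B₂ * (A * B₁ * A) := by rw [mul_assoc B₂ A (B₁ * A), ← mul_assoc A B₁ A]
      _ = B₂ * A := by rw [a1]
  calc B₁ = B₁ * A * B₁ := b1.symm
    _ = (B₂ * A) * B₁ := by rw [hBA]
    _ = B₂ * (A * B₁) := mul_assoc _ _ _
    _ = B₂ * (A * B₂) := by rw [hAB]
    _ = B₂ * A * B₂ := (mul_assoc _ _ _).symm
    _ = B₂ := b2

lemma mp_transpose {A B : Matrix (Fin N) (Fin N) ℝ} (hA : Aᵀ = A)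
    (h : IsMoorePenroseInv A B) : IsMoorePenroseInv A Bᵀ := by
  obtain ⟨a1, b1, c1, d1⟩ := h
  refine ⟨?_, ?_, ?_, ?_⟩
  · have := congrArg Matrix.transpose a1
    simp only [transpose_mul, hA] at this
    rw [← mul_assoc] at this
    exact this
  · have := congrArg Matrix.transpose b1
    simp only [transpose_mul, hA] at this
    rw [← mul_assoc] at this
    exact this
  · have h1 : A * Bᵀ = B * A := by
      calc A * Bᵀ = (B * A)ᵀ := by rw [transpose_mul, hA]
        _ = B * A := d1
    rw [h1, d1]
  · have h1 : Bᵀ * A = A * B := by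
      calc Bᵀ * A = (A * B)ᵀ := by rw [transpose_mul, hA]
        _ = A * B := c1
    rw [h1, c1]

lemma mp_symm {A B : Matrix (Fin N) (Fin N) ℝ} (hA : Aᵀ = A)
    (h : IsMoorePenroseInv A B) : Bᵀ = B :=
  mp_unique (mp_transpose hA h) h

lemma dshift {M : Matrix (Fin N) (Fin N) ℝ} (h : Mᵀ = M) (x y : Fin N → ℝ) :
    (M *ᵥ x) ⬝ᵥ y = x ⬝ᵥ (M *ᵥ y) := by
  calc (M *ᵥ x) ⬝ᵥ y = y ⬝ᵥ (M *ᵥ x) := dotProduct_comm _ _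
    _ = (y ᵥ* M) ⬝ᵥ x := dotProduct_mulVec _ _ _
    _ = (Mᵀ *ᵥ y) ⬝ᵥ x := by rw [mulVec_transpose]
    _ = (M *ᵥ y) ⬝ᵥ x := by rw [h]
    _ = x ⬝ᵥ (M *ᵥ y) := dotProduct_comm _ _


lemma mp_comm {A B : Matrix (Fin N) (Fin N) ℝ} (hA : Aᵀ = A) (hB : Bᵀ = B)
    (h : (A * B)ᵀ = A * B) : A * B = B * A := by
  conv_lhs => rw [← h, transpose_mul, hA, hB]

lemma mp_lap_mulVec_one {G : SimpleGraph (Fin N)} [DecidableRel G.Adj]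
    {B : Matrix (Fin N) (Fin N) ℝ} (hB : IsMoorePenroseInv (G.lapMatrix ℝ) B) :
    B *ᵥ (fun _ => (1 : ℝ)) = 0 := by
  have hA : (G.lapMatrix ℝ)ᵀ = G.lapMatrix ℝ := (SimpleGraph.isSymm_lapMatrix ℝ G)
  have hBs : Bᵀ = B := mp_symm hA hB
  have hcomm : G.lapMatrix ℝ * B = B * G.lapMatrix ℝ := mp_comm hA hBs hB.2.2.1
  have key : B = (B * B) * G.lapMatrix ℝ := by
    calc B = B * G.lapMatrix ℝ * B := hB.2.1.symm
      _ = B * (G.lapMatrix ℝ * B) := mul_assoc _ _ _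
      _ = B * (B * G.lapMatrix ℝ) := by rw [hcomm]
      _ = (B * B) * G.lapMatrix ℝ := (mul_assoc _ _ _).symm
  calc B *ᵥ (fun _ => (1 : ℝ)) = ((B * B) * G.lapMatrix ℝ) *ᵥ (fun _ => (1 : ℝ)) := by
        rw [← key]
    _ = (B * B) *ᵥ (G.lapMatrix ℝ *ᵥ (fun _ => (1 : ℝ))) := (mulVec_mulVec _ _ _).symm
    _ = (B * B) *ᵥ 0 := by rw [SimpleGraph.lapMatrix_mulVec_const_eq_zero]
    _ = 0 := mulVec_zero _

lemma mp_lap_proj {G : SimpleGraph (Fin N)} [DecidableRel G.Adj] (hG : G.Connected)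
    {B : Matrix (Fin N) (Fin N) ℝ} (hB : IsMoorePenroseInv (G.lapMatrix ℝ) B)
    {e : Fin N → ℝ} (he : e ⬝ᵥ (fun _ => (1 : ℝ)) = 0) :
    (B * G.lapMatrix ℝ) *ᵥ e = e := by
  set A := G.lapMatrix ℝ with hAdef
  set d : Fin N → ℝ := (B * A) *ᵥ e - e with hd
  have hAd : A *ᵥ d = 0 := by
    rw [hd, mulVec_sub, mulVec_mulVec, ← mul_assoc, hB.1, sub_self]
  have hconst : ∀ i j : Fin N, d i = d j := fun i j =>
    (SimpleGraph.lapMatrix_mulVec_eq_zero_iff_forall_reachable G).1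
      hAd i j (hG.preconnected i j)
  have hsum : d ⬝ᵥ (fun _ => (1 : ℝ)) = 0 := by
    have h1 : ((B * A) *ᵥ e) ⬝ᵥ (fun _ => (1 : ℝ))
        = e ⬝ᵥ ((B * A) *ᵥ (fun _ => (1 : ℝ))) := dshift hB.2.2.2 e _
    have h2 : (B * A) *ᵥ (fun _ => (1 : ℝ)) = 0 := by
      rw [← mulVec_mulVec, SimpleGraph.lapMatrix_mulVec_const_eq_zero, mulVec_zero]
    rw [hd, sub_dotProduct, h1, h2, dotProduct_zero, he, sub_zero]
  rcases N.eq_zero_or_pos with hN | hN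
  · rw [← sub_eq_zero]; funext i; exact absurd i.pos (by omega)
  · have j : Fin N := ⟨0, hN⟩
    have hsum' : (N : ℝ) * d j = 0 := by
      have hds : d ⬝ᵥ (fun _ => (1 : ℝ)) = ∑ i : Fin N, d i := by simp [dotProduct]
      rw [hds] at hsum
      have hcc : ∑ i : Fin N, d i = ∑ _i : Fin N, d j :=
        Finset.sum_congr rfl (fun i _ => hconst i j)
      rw [hcc, Finset.sum_const, Finset.card_univ, Fintype.card_fin, nsmul_eq_mul] at hsum
      exact hsum
    have hdj : d j = 0 :=
      (mul_eq_zero.1 hsum').resolve_left (Nat.cast_ne_zero.2 (by omega))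
    have hd0 : d = 0 := funext fun i => by rw [hconst i j, hdj]; rfl
    rw [← sub_eq_zero]; exact hd0

open scoped MatrixOrder in
/-- square root of a positive semidefinite matrix -/
noncomputable def psdSqrt (A : Matrix (Fin N) (Fin N) ℝ) : Matrix (Fin N) (Fin N) ℝ :=
  CFC.sqrt A

open scoped MatrixOrder in
lemma psdSqrt_mul_self {A : Matrix (Fin N) (Fin N) ℝ} (hA : PosSemidef A) :
    psdSqrt A * psdSqrt A = A :=
  CFC.sqrt_mul_sqrt_self A hA.nonneg

open scoped MatrixOrder in
lemma psdSqrt_posSemidef (A : Matrix (Fin N) (Fin N) ℝ) : (psdSqrt A).PosSemidef :=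
  (CFC.sqrt_nonneg A).posSemidef

lemma mp_lap_pos {G : SimpleGraph (Fin N)} [DecidableRel G.Adj] (hG : G.Connected)
    {B : Matrix (Fin N) (Fin N) ℝ} (hB : IsMoorePenroseInv (G.lapMatrix ℝ) B)
    {e : Fin N → ℝ} (he : e ⬝ᵥ (fun _ => (1 : ℝ)) = 0) (hne : e ≠ 0) :
    0 < e ⬝ᵥ (B *ᵥ e) := by
  set A := G.lapMatrix ℝ with hAdef
  have hA : Aᵀ = A := (SimpleGraph.isSymm_lapMatrix ℝ G)
  have hBs : Bᵀ = B := mp_symm hA hB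
  have hApsd : PosSemidef A := SimpleGraph.posSemidef_lapMatrix ℝ G
  have hcomm : A * B = B * A := mp_comm hA hBs hB.2.2.1
  set z : Fin N → ℝ := B *ᵥ e with hz
  have hq : z ⬝ᵥ (A *ᵥ z) = e ⬝ᵥ (B *ᵥ e) := by
    calc z ⬝ᵥ (A *ᵥ z) = (B *ᵥ e) ⬝ᵥ (A *ᵥ z) := rfl
      _ = e ⬝ᵥ (B *ᵥ (A *ᵥ z)) := dshift hBs e (A *ᵥ z)
      _ = e ⬝ᵥ ((B * (A * B)) *ᵥ e) := by rw [hz]; simp only [mulVec_mulVec]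
      _ = e ⬝ᵥ ((B * A * B) *ᵥ e) := by rw [mul_assoc]
      _ = e ⬝ᵥ (B *ᵥ e) := by rw [hB.2.1]
  have hAz : A *ᵥ z = (B * A) *ᵥ e := by rw [hz, mulVec_mulVec, hcomm]
  have hnonneg : 0 ≤ z ⬝ᵥ (A *ᵥ z) := by simpa using hApsd.dotProduct_mulVec_nonneg z
  have hne' : z ⬝ᵥ (A *ᵥ z) ≠ 0 := by
    intro h0
    have hz0 : A *ᵥ z = 0 := by
      have := (hApsd.dotProduct_mulVec_zero_iff z).1 (by simpa using h0)
      exact this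
    exact hne (by rw [← mp_lap_proj hG hB he, ← hAz, hz0])
  rw [← hq]
  exact lt_of_le_of_ne hnonneg (Ne.symm hne')

end DMDaux

open DMDaux in
/-- If every generalized eigenvalue of the pencil (eigenvalues of `L_Y⁺L_X` on the
subspace orthogonal to the all-ones vector) is at most `Λ`, then every
effective-resistance distance mapping distortion `γ^F(p,q) = d_Y(p,q)/d_X(p,q)` is at
most `Λ`. -/
theorem dmd_le_of_eigenvalue_bound (N : ℕ)
    (GX GY : SimpleGraph (Fin N)) [DecidableRel GX.Adj] [DecidableRel GY.Adj]
    (hGX : GX.Connected) (hGY : GY.Connected)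
    (Xp Yp : Matrix (Fin N) (Fin N) ℝ)
    (hXp : IsMoorePenroseInv (GX.lapMatrix ℝ) Xp)
    (hYp : IsMoorePenroseInv (GY.lapMatrix ℝ) Yp)
    (Λ : ℝ)
    (hΛ : ∀ (μ : ℝ) (v : Fin N → ℝ), v ≠ 0 → v ⬝ᵥ (fun _ => (1 : ℝ)) = 0 →
      (Yp * GX.lapMatrix ℝ).mulVec v = μ • v → μ ≤ Λ) :
    ∀ p q : Fin N, p ≠ q →
      ((Pi.single p 1 - Pi.single q 1) ⬝ᵥ Yp.mulVec (Pi.single p 1 - Pi.single q 1)) /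
        ((Pi.single p 1 - Pi.single q 1) ⬝ᵥ Xp.mulVec (Pi.single p 1 - Pi.single q 1)) ≤
      Λ := by
  intro p q hpq
  set A := GX.lapMatrix ℝ with hAdef
  have hAs : Aᵀ = A := (SimpleGraph.isSymm_lapMatrix ℝ GX)
  have hXs : Xpᵀ = Xp := mp_symm hAs hXp
  have hYs : Ypᵀ = Yp := mp_symm (SimpleGraph.isSymm_lapMatrix ℝ GY) hYp
  have hcommX : A * Xp = Xp * A := mp_comm hAs hXs hXp.2.2.1
  have hApsd : PosSemidef A := SimpleGraph.posSemidef_lapMatrix ℝ GX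
  -- the square root of A
  set R : Matrix (Fin N) (Fin N) ℝ := psdSqrt A with hRdef
  have hRR : R * R = A := psdSqrt_mul_self hApsd
  have hRs : Rᵀ = R := by
    have := (psdSqrt_posSemidef A).1
    rwa [IsHermitian, conjTranspose_eq_transpose_of_trivial] at this
  -- the vector e and its basic properties
  set e : Fin N → ℝ := Pi.single p 1 - Pi.single q 1 with hedef
  have he : e ⬝ᵥ (fun _ => (1 : ℝ)) = 0 := by
    simp [hedef, sub_dotProduct, single_dotProduct]
  have hne : e ≠ 0 := by
    intro h
    have := congrFun h p
    simp [hedef, Pi.single_apply, hpq] at this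
  have hdX : 0 < e ⬝ᵥ (Xp *ᵥ e) := mp_lap_pos hGX hXp he hne
  have hdY : 0 < e ⬝ᵥ (Yp *ᵥ e) := mp_lap_pos hGY hYp he hne
  have hprojX : (Xp * A) *ᵥ e = e := mp_lap_proj hGX hXp he
  have hAXe : A *ᵥ (Xp *ᵥ e) = e := by rw [mulVec_mulVec, hcommX, hprojX]
  -- the symmetric matrix M and the test vector g
  set M : Matrix (Fin N) (Fin N) ℝ := R * Yp * R with hMdef
  have hMs : Mᵀ = M := by
    rw [hMdef, transpose_mul, transpose_mul, hRs, hYs, mul_assoc]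
  have hMH : M.IsHermitian := by
    rw [IsHermitian, conjTranspose_eq_transpose_of_trivial]; exact hMs
  have hYpsd : PosSemidef Yp := by
    have h := (SimpleGraph.posSemidef_lapMatrix ℝ GY).mul_mul_conjTranspose_same Yp
    rwa [conjTranspose_eq_transpose_of_trivial, hYs, hYp.2.1] at h
  have hMpsd : PosSemidef M := by
    have h := hYpsd.mul_mul_conjTranspose_same R
    rwa [conjTranspose_eq_transpose_of_trivial, hRs] at h
  set g : Fin N → ℝ := R *ᵥ (Xp *ᵥ e) with hgdef
  have hgg : g ⬝ᵥ g = e ⬝ᵥ (Xp *ᵥ e) := by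
    calc g ⬝ᵥ g = (Xp *ᵥ e) ⬝ᵥ (R *ᵥ (R *ᵥ (Xp *ᵥ e))) := dshift hRs _ _
      _ = (Xp *ᵥ e) ⬝ᵥ (A *ᵥ (Xp *ᵥ e)) := by rw [mulVec_mulVec, hRR]
      _ = (Xp *ᵥ e) ⬝ᵥ e := by rw [hAXe]
      _ = e ⬝ᵥ (Xp *ᵥ e) := dotProduct_comm _ _
  have hMg : M *ᵥ g = R *ᵥ (Yp *ᵥ e) := by
    calc M *ᵥ g = (R * Yp) *ᵥ (R *ᵥ (R *ᵥ (Xp *ᵥ e))) := by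
          rw [hgdef, hMdef]; simp only [mulVec_mulVec, mul_assoc]
      _ = (R * Yp) *ᵥ (A *ᵥ (Xp *ᵥ e)) := by rw [mulVec_mulVec _ R R, hRR]
      _ = (R * Yp) *ᵥ e := by rw [hAXe]
      _ = R *ᵥ (Yp *ᵥ e) := (mulVec_mulVec _ _ _).symm
  have hgMg : g ⬝ᵥ (M *ᵥ g) = e ⬝ᵥ (Yp *ᵥ e) := by
    calc g ⬝ᵥ (M *ᵥ g) = g ⬝ᵥ (R *ᵥ (Yp *ᵥ e)) := by rw [hMg]
      _ = (Xp *ᵥ e) ⬝ᵥ (R *ᵥ (R *ᵥ (Yp *ᵥ e))) := dshift hRs _ _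
      _ = (Xp *ᵥ e) ⬝ᵥ (A *ᵥ (Yp *ᵥ e)) := by rw [mulVec_mulVec _ R R, hRR]
      _ = (A *ᵥ (Xp *ᵥ e)) ⬝ᵥ (Yp *ᵥ e) := (dshift hAs _ _).symm
      _ = e ⬝ᵥ (Yp *ᵥ e) := by rw [hAXe]
  -- every nonzero eigenvalue of M is at most Λ
  have hYp1 : Yp *ᵥ (fun _ => (1 : ℝ)) = 0 := mp_lap_mulVec_one hYp
  have claimA : ∀ (μ : ℝ) (w : Fin N → ℝ), w ≠ 0 → M *ᵥ w = μ • w → μ ≠ 0 → μ ≤ Λ := by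
    intro μ w hw hMw hμ
    set v : Fin N → ℝ := Yp *ᵥ (R *ᵥ w) with hvdef
    have hv1 : R *ᵥ v = μ • w := by
      rw [hvdef]; simp only [mulVec_mulVec]
      rw [← mul_assoc, ← hMdef, hMw]
    have hvne : v ≠ 0 := by
      intro h0
      rw [h0, mulVec_zero] at hv1
      exact hw (by simpa [hμ, smul_eq_zero] using hv1.symm)
    have hvone : v ⬝ᵥ (fun _ => (1 : ℝ)) = 0 := by
      rw [hvdef, dshift hYs, hYp1, dotProduct_zero]
    have heig : (Yp * A) *ᵥ v = μ • v := by
      calc (Yp * A) *ᵥ v = Yp *ᵥ (A *ᵥ v) := (mulVec_mulVec _ _ _).symm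
        _ = Yp *ᵥ (R *ᵥ (R *ᵥ v)) := by rw [mulVec_mulVec _ R R, hRR]
        _ = Yp *ᵥ (R *ᵥ (μ • w)) := by rw [hv1]
        _ = Yp *ᵥ (μ • (R *ᵥ w)) := by rw [mulVec_smul]
        _ = μ • v := by rw [mulVec_smul, hvdef]
    exact hΛ μ v hvne hvone heig
  -- Λ is nonnegative
  have hΛ0 : 0 ≤ Λ := by
    by_cases hall : ∀ i, hMH.eigenvalues i = 0
    · exfalso
      have hM0 : M = 0 := by
        have hsp := hMH.spectral_theorem
        have hdiag : ((RCLike.ofReal ∘ hMH.eigenvalues) : Fin N → ℝ) = 0 := by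
          funext i; simp [hall i]
        rw [hdiag, show (diagonal (0 : Fin N → ℝ)) = 0 from diagonal_zero,
          map_zero] at hsp
        exact hsp
      rw [hM0, zero_mulVec, dotProduct_zero] at hgMg
      exact absurd hgMg (ne_of_lt hdY)
    · push_neg at hall
      obtain ⟨i, hi⟩ := hall
      have hwne : (⇑(hMH.eigenvectorBasis i) : Fin N → ℝ) ≠ 0 := by
        intro h
        exact hMH.eigenvectorBasis.orthonormal.ne_zero i (by ext j; exact congrFun h j)
      have := claimA _ _ hwne (hMH.mulVec_eigenvectorBasis i) hi
      exact le_trans (hMpsd.eigenvalues_nonneg i) this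
  -- Λ • 1 - M is positive semidefinite
  set C : Matrix (Fin N) (Fin N) ℝ := Λ • (1 : Matrix (Fin N) (Fin N) ℝ) - M with hCdef
  have hCH : C.IsHermitian := by
    rw [IsHermitian, conjTranspose_eq_transpose_of_trivial, hCdef, transpose_sub,
      transpose_smul, transpose_one, hMs]
  have hCeig : ∀ i, 0 ≤ hCH.eigenvalues i := by
    intro i
    set ν := hCH.eigenvalues i with hν
    set w : Fin N → ℝ := ⇑(hCH.eigenvectorBasis i) with hwdef
    have hw : C *ᵥ w = ν • w := hCH.mulVec_eigenvectorBasis i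
    have hwne : w ≠ 0 := by
      intro h
      exact hCH.eigenvectorBasis.orthonormal.ne_zero i (by ext j; exact congrFun h j)
    have hMw : M *ᵥ w = (Λ - ν) • w := by
      have : C *ᵥ w = Λ • w - M *ᵥ w := by
        rw [hCdef, sub_mulVec, smul_mulVec, one_mulVec]
      rw [this] at hw
      rw [sub_smul, ← hw]; abel
    by_cases h0 : Λ - ν = 0
    · linarith [hΛ0, sub_eq_zero.1 h0]
    · have := claimA _ _ hwne hMw h0
      linarith
  have hCpsd : PosSemidef C := hCH.posSemidef_iff_eigenvalues_nonneg.mpr hCeig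
  have hkey : 0 ≤ Λ * (e ⬝ᵥ (Xp *ᵥ e)) - e ⬝ᵥ (Yp *ᵥ e) := by
    have h := hCpsd.dotProduct_mulVec_nonneg g
    have hCg : g ⬝ᵥ (C *ᵥ g) = Λ * (g ⬝ᵥ g) - g ⬝ᵥ (M *ᵥ g) := by
      rw [hCdef, sub_mulVec, smul_mulVec, one_mulVec, dotProduct_sub,
        dotProduct_smul, smul_eq_mul]
    rw [← hgg, ← hgMg, ← hCg]
    simpa using h
  rw [div_le_iff₀ hdX]
  linarith
end
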